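/- Let R′ be an n⁴ complex array of real type I and let η be a real metric that is R′-covariant. Then the braided vector algebra V(R′,R) admits a (necessarily unique) star structure * satisfying (v^i)* = Σ_a η_{ia} v^a for all i = 1,…,n. -/

import Mathlib

open scoped ComplexConjugate

noncomputable section

/-- An n⁴ array `R^i{}_j{}^k{}_l` viewed as an n²×n² matrix with row index `(i,k)`,
column index `(j,l)`. -/
def toMat (n : ℕ) (R : Fin n → Fin n → Fin n → Fin n → ℂ) :
    Matrix (Fin n × Fin n) (Fin n × Fin n) ℂ :=
  Matrix.of fun p q => R p.1 q.1 p.2 q.2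

/-- Entries `(R⁻¹)^i{}_j{}^k{}_l` of the matrix inverse of `R`. -/
def invEntry (n : ℕ) (R : Fin n → Fin n → Fin n → Fin n → ℂ)
    (i j k l : Fin n) : ℂ :=
  (toMat n R)⁻¹ (i, k) (j, l)

/-- `R` is of real type I: `conj (R^i{}_j{}^k{}_l) = R^l{}_k{}^j{}_i`. -/
def RealTypeI (n : ℕ) (R : Fin n → Fin n → Fin n → Fin n → ℂ) : Prop :=
  ∀ i j k l, conj (R i j k l) = R l k j i

/-- `R` is of antireal type I: `R` invertible and
`conj (R^i{}_j{}^k{}_l) = (R⁻¹)^j{}_i{}^l{}_k`. -/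
def AntirealTypeI (n : ℕ) (R : Fin n → Fin n → Fin n → Fin n → ℂ) : Prop :=
  IsUnit (toMat n R) ∧ ∀ i j k l, conj (R i j k l) = invEntry n R j i l k

/-- `R` is of real type II w.r.t. the involution `σ`:
`conj (R^i{}_j{}^k{}_l) = R^{σk}{}_{σl}{}^{σi}{}_{σj}`. -/
def RealTypeII (n : ℕ) (R : Fin n → Fin n → Fin n → Fin n → ℂ)
    (σ : Fin n → Fin n) : Prop :=
  ∀ i j k l, conj (R i j k l) = R (σ k) (σ l) (σ i) (σ j)

/-- `R` is of antireal type II w.r.t. the involution `σ`: `R` invertible and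
`conj (R^i{}_j{}^k{}_l) = (R⁻¹)^{σi}{}_{σj}{}^{σk}{}_{σl}`. -/
def AntirealTypeII (n : ℕ) (R : Fin n → Fin n → Fin n → Fin n → ℂ)
    (σ : Fin n → Fin n) : Prop :=
  IsUnit (toMat n R) ∧
    ∀ i j k l, conj (R i j k l) = invEntry n R (σ i) (σ j) (σ k) (σ l)

/-- The metric `η` (entries `η^{ij} = η i j`) is `R`-covariant:
`Σ η^{ia} η^{jb} R^k{}_a{}^l{}_b = Σ R^i{}_a{}^j{}_b η^{ak} η^{bl}`. -/
def MetricCovariant (n : ℕ) (R : Fin n → Fin n → Fin n → Fin n → ℂ)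
    (η : Matrix (Fin n) (Fin n) ℂ) : Prop :=
  ∀ i j k l, (∑ a : Fin n, ∑ b : Fin n, η i a * η j b * R k a l b) =
    ∑ a : Fin n, ∑ b : Fin n, R i a j b * η a k * η b l

/-- The metric `η` is real: `conj (η^{ij}) = η_{ji}`, where the lower-index entries
`η_{ij}` are those of the transposed inverse, i.e. `η_{ji} = (η⁻¹) i j`. -/
def MetricReal (n : ℕ) (η : Matrix (Fin n) (Fin n) ℂ) : Prop :=
  ∀ i j, conj (η i j) = η⁻¹ i j

/-- The relations `x_i x_j = Σ_{a,b} R'^a{}_i{}^b{}_j x_b x_a` of the braided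
covector algebra, as a relation on the free algebra. -/
inductive CovRel (n : ℕ) (R' : Fin n → Fin n → Fin n → Fin n → ℂ) :
    FreeAlgebra ℂ (Fin n) → FreeAlgebra ℂ (Fin n) → Prop
  | rel (i j : Fin n) :
      CovRel n R' (FreeAlgebra.ι ℂ i * FreeAlgebra.ι ℂ j)
        (∑ a : Fin n, ∑ b : Fin n,
          R' a i b j • (FreeAlgebra.ι ℂ b * FreeAlgebra.ι ℂ a))

/-- The braided covector algebra `V̌(R',R)`: the free algebra on `x_1,…,x_n` modulo
the two-sided ideal generated by `x_i x_j − Σ R'^a{}_i{}^b{}_j x_b x_a`. -/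
abbrev CovAlg (n : ℕ) (R' : Fin n → Fin n → Fin n → Fin n → ℂ) :=
  RingQuot (CovRel n R')

/-- The generator `x_i` of the braided covector algebra. -/
def xg (n : ℕ) (R' : Fin n → Fin n → Fin n → Fin n → ℂ) (i : Fin n) :
    CovAlg n R' :=
  RingQuot.mkAlgHom ℂ (CovRel n R') (FreeAlgebra.ι ℂ i)

/-- The relations `v^i v^j = Σ_{a,b} R'^i{}_a{}^j{}_b v^b v^a` of the braided
vector algebra, as a relation on the free algebra. -/
inductive VecRel (n : ℕ) (R' : Fin n → Fin n → Fin n → Fin n → ℂ) :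
    FreeAlgebra ℂ (Fin n) → FreeAlgebra ℂ (Fin n) → Prop
  | rel (i j : Fin n) :
      VecRel n R' (FreeAlgebra.ι ℂ i * FreeAlgebra.ι ℂ j)
        (∑ a : Fin n, ∑ b : Fin n,
          R' i a j b • (FreeAlgebra.ι ℂ b * FreeAlgebra.ι ℂ a))

/-- The braided vector algebra `V(R',R)`: the free algebra on `v^1,…,v^n` modulo
the two-sided ideal generated by `v^i v^j − Σ R'^i{}_a{}^j{}_b v^b v^a`. -/
abbrev VecAlg (n : ℕ) (R' : Fin n → Fin n → Fin n → Fin n → ℂ) :=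
  RingQuot (VecRel n R')

/-- The generator `v^i` of the braided vector algebra. -/
def vg (n : ℕ) (R' : Fin n → Fin n → Fin n → Fin n → ℂ) (i : Fin n) :
    VecAlg n R' :=
  RingQuot.mkAlgHom ℂ (VecRel n R') (FreeAlgebra.ι ℂ i)

/-- The relations of the braided tensor square of the braided covector algebra:
generators `x_i = ι (inl i)`, `y_i = ι (inr i)`, with `x`- and `y`-relations from
`R'` and cross relations `y_i x_j = Σ_{a,b} R^a{}_i{}^b{}_j x_b y_a`. -/
inductive SqRel (n : ℕ) (R' R : Fin n → Fin n → Fin n → Fin n → ℂ) :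
    FreeAlgebra ℂ (Fin n ⊕ Fin n) → FreeAlgebra ℂ (Fin n ⊕ Fin n) → Prop
  | xx (i j : Fin n) :
      SqRel n R' R (FreeAlgebra.ι ℂ (Sum.inl i) * FreeAlgebra.ι ℂ (Sum.inl j))
        (∑ a : Fin n, ∑ b : Fin n, R' a i b j •
          (FreeAlgebra.ι ℂ (Sum.inl b) * FreeAlgebra.ι ℂ (Sum.inl a)))
  | yy (i j : Fin n) :
      SqRel n R' R (FreeAlgebra.ι ℂ (Sum.inr i) * FreeAlgebra.ι ℂ (Sum.inr j))
        (∑ a : Fin n, ∑ b : Fin n, R' a i b j •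
          (FreeAlgebra.ι ℂ (Sum.inr b) * FreeAlgebra.ι ℂ (Sum.inr a)))
  | yx (i j : Fin n) :
      SqRel n R' R (FreeAlgebra.ι ℂ (Sum.inr i) * FreeAlgebra.ι ℂ (Sum.inl j))
        (∑ a : Fin n, ∑ b : Fin n, R a i b j •
          (FreeAlgebra.ι ℂ (Sum.inl b) * FreeAlgebra.ι ℂ (Sum.inr a)))

/-- The braided tensor square `B` of the braided covector algebra. -/
abbrev SqAlg (n : ℕ) (R' R : Fin n → Fin n → Fin n → Fin n → ℂ) :=
  RingQuot (SqRel n R' R)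

/-- The generator `x_i` of the braided tensor square. -/
def Xg (n : ℕ) (R' R : Fin n → Fin n → Fin n → Fin n → ℂ) (i : Fin n) :
    SqAlg n R' R :=
  RingQuot.mkAlgHom ℂ (SqRel n R' R) (FreeAlgebra.ι ℂ (Sum.inl i))

/-- The generator `y_i` of the braided tensor square. -/
def Yg (n : ℕ) (R' R : Fin n → Fin n → Fin n → Fin n → ℂ) (i : Fin n) :
    SqAlg n R' R :=
  RingQuot.mkAlgHom ℂ (SqRel n R' R) (FreeAlgebra.ι ℂ (Sum.inr i))

/-- A conjugate-linear, antimultiplicative, unital map between ℂ-algebras. -/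
def IsConjLinearAntiHom {A B : Type*} [Semiring A] [Algebra ℂ A]
    [Semiring B] [Algebra ℂ B] (f : A → B) : Prop :=
  (∀ a b : A, f (a + b) = f a + f b) ∧
  (∀ (c : ℂ) (a : A), f (c • a) = (starRingEnd ℂ) c • f a) ∧
  (∀ a b : A, f (a * b) = f b * f a) ∧
  f 1 = 1

/-- A star structure on a ℂ-algebra: a conjugate-linear, antimultiplicative,
unital, involutive map. -/
def IsStarStructure {A : Type*} [Semiring A] [Algebra ℂ A] (f : A → A) : Prop :=
  (∀ a b : A, f (a + b) = f a + f b) ∧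
  (∀ (c : ℂ) (a : A), f (c • a) = (starRingEnd ℂ) c • f a) ∧
  (∀ a b : A, f (a * b) = f b * f a) ∧
  f 1 = 1 ∧
  (∀ a : A, f (f a) = a)


lemma key_coeff {n : ℕ} (R' : Fin n → Fin n → Fin n → Fin n → ℂ)
    (η : Matrix (Fin n) (Fin n) ℂ) (hη : IsUnit η)
    (hcov : ∀ i j k l, (∑ a : Fin n, ∑ b : Fin n, η i a * η j b * R' k a l b) =
      ∑ a : Fin n, ∑ b : Fin n, R' i a j b * η a k * η b l)
    (i j p q : Fin n) :
    (∑ c : Fin n, ∑ d : Fin n, η⁻¹ c j * η⁻¹ d i * R' c p d q)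
      = ∑ a : Fin n, ∑ b : Fin n, R' b j a i * η⁻¹ q a * η⁻¹ p b := by
  classical
  have hdet := (Matrix.isUnit_iff_isUnit_det η).mp hη
  have hud : η * η⁻¹ = 1 := Matrix.mul_nonsing_inv η hdet
  have hdu : η⁻¹ * η = 1 := Matrix.nonsing_inv_mul η hdet
  set E2 : Matrix (Fin n × Fin n) (Fin n × Fin n) ℂ :=
    Matrix.of fun u w => η u.1 w.1 * η u.2 w.2 with hE2
  set C2 : Matrix (Fin n × Fin n) (Fin n × Fin n) ℂ :=
    Matrix.of fun u w => η⁻¹ u.1 w.1 * η⁻¹ u.2 w.2 with hC2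
  set S : Matrix (Fin n × Fin n) (Fin n × Fin n) ℂ :=
    Matrix.of fun u w => R' u.1 w.1 u.2 w.2 with hS
  have hone : ∀ u w : Fin n × Fin n,
      (1 : Matrix (Fin n × Fin n) (Fin n × Fin n) ℂ) u w
        = (1 : Matrix (Fin n) (Fin n) ℂ) u.1 w.1 * (1 : Matrix (Fin n) (Fin n) ℂ) u.2 w.2 := by
    rintro ⟨a,b⟩ ⟨c,d⟩
    simp [Matrix.one_apply, Prod.ext_iff, ite_and]
    split_ifs <;> simp_all
  have hEC : E2 * C2 = 1 := by
    ext ⟨a,b⟩ ⟨c,d⟩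
    rw [Matrix.mul_apply, Fintype.sum_prod_type, hone]
    rw [← hud, Matrix.mul_apply, Matrix.mul_apply, Finset.sum_mul_sum]
    simp [hE2, hC2]
    exact Finset.sum_congr rfl fun x _ => Finset.sum_congr rfl fun y _ => by ring
  have hCE : C2 * E2 = 1 := by
    ext ⟨a,b⟩ ⟨c,d⟩
    rw [Matrix.mul_apply, Fintype.sum_prod_type, hone]
    rw [← hdu, Matrix.mul_apply, Matrix.mul_apply, Finset.sum_mul_sum]
    simp [hE2, hC2]
    exact Finset.sum_congr rfl fun x _ => Finset.sum_congr rfl fun y _ => by ring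
  have hcovM : E2 * S.transpose = S * E2 := by
    ext ⟨a,b⟩ ⟨c,d⟩
    rw [Matrix.mul_apply, Matrix.mul_apply, Fintype.sum_prod_type, Fintype.sum_prod_type]
    have := hcov a b c d
    simp only [hE2, hS, Matrix.transpose_apply, Matrix.of_apply]
    calc (∑ x : Fin n, ∑ y : Fin n, η a x * η b y * R' c x d y)
        = ∑ x : Fin n, ∑ y : Fin n, R' a x b y * η x c * η y d := hcov a b c d
      _ = ∑ x : Fin n, ∑ y : Fin n, R' a x b y * (η x c * η y d) := by
          simp_rw [mul_assoc]
  have key : C2.transpose * S = S.transpose * C2.transpose := by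
    have h1 : S * E2.transpose = E2.transpose * S.transpose := by
      have := congrArg Matrix.transpose hcovM
      simpa [Matrix.transpose_mul] using this
    have h2 : E2.transpose * C2.transpose = 1 := by
      have := congrArg Matrix.transpose hCE
      simpa [Matrix.transpose_mul] using this
    have h3 : C2.transpose * E2.transpose = 1 := by
      have := congrArg Matrix.transpose hEC
      simpa [Matrix.transpose_mul] using this
    calc C2.transpose * S
        = C2.transpose * (S * (E2.transpose * C2.transpose)) := by rw [h2, mul_one]
      _ = C2.transpose * (S * E2.transpose) * C2.transpose := by
          noncomm_ring
      _ = C2.transpose * (E2.transpose * S.transpose) * C2.transpose := by rw [h1]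
      _ = (C2.transpose * E2.transpose) * (S.transpose * C2.transpose) := by
          noncomm_ring
      _ = S.transpose * C2.transpose := by rw [h3, one_mul]
  have := congrFun (congrFun key (j, i)) (p, q)
  rw [Matrix.mul_apply, Matrix.mul_apply, Fintype.sum_prod_type, Fintype.sum_prod_type] at this
  simp only [hC2, hS, Matrix.transpose_apply, Matrix.of_apply] at this
  calc (∑ c : Fin n, ∑ d : Fin n, η⁻¹ c j * η⁻¹ d i * R' c p d q)
      = ∑ c : Fin n, ∑ d : Fin n, η⁻¹ c j * η⁻¹ d i * R' c p d q := rfl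
    _ = ∑ a : Fin n, ∑ b : Fin n, R' a j b i * (η⁻¹ p a * η⁻¹ q b) := this
    _ = ∑ a : Fin n, ∑ b : Fin n, R' b j a i * η⁻¹ q a * η⁻¹ p b := by
        rw [Finset.sum_comm]
        congr 1; ext a; congr 1; ext b; ring


lemma sum4_swap {n : ℕ} {M : Type*} [AddCommMonoid M]
    (f : Fin n → Fin n → Fin n → Fin n → M) :
    (∑ c : Fin n, ∑ d : Fin n, ∑ p : Fin n, ∑ q : Fin n, f c d p q)
      = ∑ p : Fin n, ∑ q : Fin n, ∑ c : Fin n, ∑ d : Fin n, f c d p q := by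
  calc (∑ c : Fin n, ∑ d : Fin n, ∑ p : Fin n, ∑ q : Fin n, f c d p q)
      = ∑ c : Fin n, ∑ p : Fin n, ∑ d : Fin n, ∑ q : Fin n, f c d p q :=
        Finset.sum_congr rfl fun _ _ => Finset.sum_comm
    _ = ∑ p : Fin n, ∑ c : Fin n, ∑ d : Fin n, ∑ q : Fin n, f c d p q := Finset.sum_comm
    _ = ∑ p : Fin n, ∑ c : Fin n, ∑ q : Fin n, ∑ d : Fin n, f c d p q :=
        Finset.sum_congr rfl fun _ _ => Finset.sum_congr rfl fun _ _ => Finset.sum_comm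
    _ = ∑ p : Fin n, ∑ q : Fin n, ∑ c : Fin n, ∑ d : Fin n, f c d p q :=
        Finset.sum_congr rfl fun _ _ => Finset.sum_comm

lemma op_sum' {κ M : Type*} [AddCommMonoid M] (s : Finset κ) (f : κ → M) :
    MulOpposite.op (∑ i ∈ s, f i) = ∑ i ∈ s, MulOpposite.op (f i) := by
  simpa using map_sum (MulOpposite.opAddEquiv (α := M)) f s

set_option maxHeartbeats 2000000

/-- if `R'` is of real type I and `η` is a real `R'`-covariant metric,
the braided vector algebra admits a unique star structure with
`(v^i)* = Σ_a η_{ia} v^a` (where `η_{ia} = (η⁻¹) a i` are the entries of the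
transposed inverse of `η`). -/
theorem stmt4 (n : ℕ) (hn : 1 ≤ n)
    (R R' : Fin n → Fin n → Fin n → Fin n → ℂ)
    (hR' : RealTypeI n R')
    (η : Matrix (Fin n) (Fin n) ℂ) (hη : IsUnit η)
    (hreal : MetricReal n η) (hcov : MetricCovariant n R' η) :
    ∃! f : VecAlg n R' → VecAlg n R',
      IsStarStructure f ∧
        ∀ i : Fin n, f (vg n R' i) = ∑ a : Fin n, η⁻¹ a i • vg n R' a := by
  classical
  set L : Fin n → VecAlg n R' := fun i => ∑ a : Fin n, η⁻¹ a i • vg n R' a with hLdef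
  -- the relation in the quotient
  have hvv : ∀ c d : Fin n, vg n R' c * vg n R' d
      = ∑ a : Fin n, ∑ b : Fin n, R' c a d b • (vg n R' b * vg n R' a) := by
    intro c d
    have h := RingQuot.mkAlgHom_rel ℂ (VecRel.rel (n := n) (R' := R') c d)
    simpa [vg, map_sum, map_mul, map_smul] using h
  have expand : ∀ u v : Fin n → ℂ,
      (∑ c : Fin n, u c • vg n R' c) * (∑ d : Fin n, v d • vg n R' d)
        = ∑ c : Fin n, ∑ d : Fin n, (u c * v d) • (vg n R' c * vg n R' d) := by
    intro u v
    rw [Finset.sum_mul]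
    refine Finset.sum_congr rfl fun c _ => ?_
    rw [Finset.mul_sum]
    refine Finset.sum_congr rfl fun d _ => ?_
    rw [smul_mul_assoc, mul_smul_comm, smul_smul]
  have hLL : ∀ i j : Fin n,
      L j * L i = ∑ a : Fin n, ∑ b : Fin n, R' b j a i • (L a * L b) := by
    intro i j
    have lhs : L j * L i
        = ∑ p : Fin n, ∑ q : Fin n,
            (∑ c : Fin n, ∑ d : Fin n, η⁻¹ c j * η⁻¹ d i * R' c p d q) • (vg n R' q * vg n R' p) := by
      rw [hLdef]
      rw [expand]
      calc (∑ c : Fin n, ∑ d : Fin n, (η⁻¹ c j * η⁻¹ d i) • (vg n R' c * vg n R' d))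
          = ∑ c : Fin n, ∑ d : Fin n, ∑ p : Fin n, ∑ q : Fin n,
              (η⁻¹ c j * η⁻¹ d i * R' c p d q) • (vg n R' q * vg n R' p) := by
            refine Finset.sum_congr rfl fun c _ => Finset.sum_congr rfl fun d _ => ?_
            rw [hvv c d, Finset.smul_sum]
            refine Finset.sum_congr rfl fun p _ => ?_
            rw [Finset.smul_sum]
            refine Finset.sum_congr rfl fun q _ => ?_
            rw [smul_smul]
        _ = ∑ p : Fin n, ∑ q : Fin n, ∑ c : Fin n, ∑ d : Fin n,
              (η⁻¹ c j * η⁻¹ d i * R' c p d q) • (vg n R' q * vg n R' p) := sum4_swap _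
        _ = ∑ p : Fin n, ∑ q : Fin n,
              (∑ c : Fin n, ∑ d : Fin n, η⁻¹ c j * η⁻¹ d i * R' c p d q) • (vg n R' q * vg n R' p) := by
            simp_rw [Finset.sum_smul]
    have rhs : (∑ a : Fin n, ∑ b : Fin n, R' b j a i • (L a * L b))
        = ∑ p : Fin n, ∑ q : Fin n,
            (∑ a : Fin n, ∑ b : Fin n, R' b j a i * η⁻¹ q a * η⁻¹ p b) • (vg n R' q * vg n R' p) := by
      calc (∑ a : Fin n, ∑ b : Fin n, R' b j a i • (L a * L b))
          = ∑ a : Fin n, ∑ b : Fin n, ∑ q : Fin n, ∑ p : Fin n,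
              (R' b j a i * η⁻¹ q a * η⁻¹ p b) • (vg n R' q * vg n R' p) := by
            refine Finset.sum_congr rfl fun a _ => Finset.sum_congr rfl fun b _ => ?_
            rw [hLdef, expand, Finset.smul_sum]
            refine Finset.sum_congr rfl fun q _ => ?_
            rw [Finset.smul_sum]
            refine Finset.sum_congr rfl fun p _ => ?_
            rw [smul_smul, mul_assoc]
        _ = ∑ q : Fin n, ∑ p : Fin n, ∑ a : Fin n, ∑ b : Fin n,
              (R' b j a i * η⁻¹ q a * η⁻¹ p b) • (vg n R' q * vg n R' p) := sum4_swap _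
        _ = ∑ p : Fin n, ∑ q : Fin n, ∑ a : Fin n, ∑ b : Fin n,
              (R' b j a i * η⁻¹ q a * η⁻¹ p b) • (vg n R' q * vg n R' p) := Finset.sum_comm
        _ = ∑ p : Fin n, ∑ q : Fin n,
              (∑ a : Fin n, ∑ b : Fin n, R' b j a i * η⁻¹ q a * η⁻¹ p b) • (vg n R' q * vg n R' p) := by
            simp_rw [Finset.sum_smul]
    rw [lhs, rhs]
    refine Finset.sum_congr rfl fun p _ => Finset.sum_congr rfl fun q _ => ?_
    rw [key_coeff R' η hη hcov i j p q]
  -- the ring hom to the opposite algebra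
  let fc : ℂ →+* (VecAlg n R')ᵐᵒᵖ := (algebraMap ℂ ((VecAlg n R')ᵐᵒᵖ)).comp (starRingEnd ℂ)
  let gm : FreeMonoid (Fin n) →* (VecAlg n R')ᵐᵒᵖ :=
    FreeMonoid.lift fun i => MulOpposite.op (L i)
  have hcomm : ∀ (x : ℂ) (y : FreeMonoid (Fin n)),
      Commute (fc x) (gm y) := fun x y =>
    show Commute ((algebraMap ℂ ((VecAlg n R')ᵐᵒᵖ)) (starRingEnd ℂ x)) (gm y) from
      Algebra.commute_algebraMap_left _ _
  let Φ : FreeAlgebra ℂ (Fin n) →+* (VecAlg n R')ᵐᵒᵖ :=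
    (MonoidAlgebra.liftNCRingHom fc gm hcomm).comp
      (FreeAlgebra.equivMonoidAlgebraFreeMonoid (R := ℂ) (X := Fin n)).toAlgHom.toRingHom
  have hΦι : ∀ i : Fin n, Φ (FreeAlgebra.ι ℂ i) = MulOpposite.op (L i) := by
    intro i
    show (MonoidAlgebra.liftNCRingHom fc gm hcomm)
        ((FreeAlgebra.equivMonoidAlgebraFreeMonoid (R := ℂ) (X := Fin n)) (FreeAlgebra.ι ℂ i)) = _
    have h1 : (FreeAlgebra.equivMonoidAlgebraFreeMonoid (R := ℂ) (X := Fin n)) (FreeAlgebra.ι ℂ i)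
        = MonoidAlgebra.single (FreeMonoid.of i) 1 := by
      simp [FreeAlgebra.equivMonoidAlgebraFreeMonoid, MonoidAlgebra.of_apply]
    rw [h1]
    simp [MonoidAlgebra.liftNCRingHom, MonoidAlgebra.liftNC_single, gm]
  have hΦalg : ∀ c : ℂ, Φ (algebraMap ℂ (FreeAlgebra ℂ (Fin n)) c)
      = MulOpposite.op (algebraMap ℂ (VecAlg n R') (conj c)) := by
    intro c
    show (MonoidAlgebra.liftNCRingHom fc gm hcomm)
        ((FreeAlgebra.equivMonoidAlgebraFreeMonoid (R := ℂ) (X := Fin n))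
          (algebraMap ℂ _ c)) = _
    rw [AlgEquiv.commutes]
    have h1 : (algebraMap ℂ (MonoidAlgebra ℂ (FreeMonoid (Fin n))) c)
        = MonoidAlgebra.single 1 c := rfl
    rw [h1]
    simp [MonoidAlgebra.liftNCRingHom, MonoidAlgebra.liftNC_single, fc,
      MulOpposite.algebraMap_apply]
  have hrel : ∀ ⦃x y : FreeAlgebra ℂ (Fin n)⦄, VecRel n R' x y → Φ x = Φ y := by
    rintro _ _ ⟨i, j⟩
    have hterm : ∀ a b : Fin n,
        Φ (R' i a j b • (FreeAlgebra.ι ℂ b * FreeAlgebra.ι ℂ a))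
          = MulOpposite.op (conj (R' i a j b) • (L a * L b)) := by
      intro a b
      rw [Algebra.smul_def, map_mul, map_mul, hΦalg, hΦι, hΦι]
      rw [← MulOpposite.op_mul, ← MulOpposite.op_mul]
      refine congrArg MulOpposite.op ?_
      rw [Algebra.smul_def, ← Algebra.commutes]
    have lhs' : Φ (FreeAlgebra.ι ℂ i * FreeAlgebra.ι ℂ j) = MulOpposite.op (L j * L i) := by
      rw [map_mul, hΦι, hΦι, ← MulOpposite.op_mul]
    have rhs' : Φ (∑ a : Fin n, ∑ b : Fin n,
          R' i a j b • (FreeAlgebra.ι ℂ b * FreeAlgebra.ι ℂ a))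
        = MulOpposite.op (∑ a : Fin n, ∑ b : Fin n, R' b j a i • (L a * L b)) := by
      rw [map_sum, op_sum']
      refine Finset.sum_congr rfl fun a _ => ?_
      rw [map_sum, op_sum']
      refine Finset.sum_congr rfl fun b _ => ?_
      rw [hterm, hR' i a j b]
    rw [lhs', rhs', hLL]
  -- descend to the quotient
  let F : VecAlg n R' →+* (VecAlg n R')ᵐᵒᵖ := RingQuot.lift ⟨Φ, hrel⟩
  let f : VecAlg n R' → VecAlg n R' := fun z => (F z).unop
  have hFmk : ∀ x : FreeAlgebra ℂ (Fin n),
      F ((RingQuot.mkAlgHom ℂ (VecRel n R')) x) = Φ x := by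
    intro x
    have h1 : (RingQuot.mkAlgHom ℂ (VecRel n R')) x = RingQuot.mkRingHom (VecRel n R') x := by
      rw [← RingQuot.mkAlgHom_coe ℂ (VecRel n R')]; rfl
    rw [h1]
    exact RingQuot.lift_mkRingHom_apply Φ hrel x
  have hfadd : ∀ a b : VecAlg n R', f (a + b) = f a + f b := by
    intro a b; show (F (a+b)).unop = _; rw [map_add]; rfl
  have hfmul : ∀ a b : VecAlg n R', f (a * b) = f b * f a := by
    intro a b; show (F (a*b)).unop = _; rw [map_mul]; rfl
  have hfone : f 1 = 1 := by show (F 1).unop = 1; rw [map_one]; rfl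
  have hfalg : ∀ c : ℂ, f (algebraMap ℂ (VecAlg n R') c)
      = algebraMap ℂ (VecAlg n R') (conj c) := by
    intro c
    have h1 : algebraMap ℂ (VecAlg n R') c
        = (RingQuot.mkAlgHom ℂ (VecRel n R')) (algebraMap ℂ (FreeAlgebra ℂ (Fin n)) c) :=
      ((RingQuot.mkAlgHom ℂ (VecRel n R')).commutes c).symm
    show (F _).unop = _
    rw [h1, hFmk, hΦalg, MulOpposite.unop_op]
  have hfsmul : ∀ (c : ℂ) (a : VecAlg n R'), f (c • a) = (starRingEnd ℂ) c • f a := by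
    intro c a
    rw [Algebra.smul_def, hfmul, hfalg, ← Algebra.commutes, ← Algebra.smul_def]
  have hfgen : ∀ i : Fin n, f (vg n R' i) = L i := by
    intro i
    show (F ((RingQuot.mkAlgHom ℂ (VecRel n R')) (FreeAlgebra.ι ℂ i))).unop = _
    rw [hFmk, hΦι, MulOpposite.unop_op]
  have hfsum : ∀ {κ : Type} (s : Finset κ) (t : κ → VecAlg n R'),
      f (∑ k ∈ s, t k) = ∑ k ∈ s, f (t k) := by
    intro κ s t
    show (F _).unop = _
    rw [map_sum]
    simpa [f] using map_sum (MulOpposite.opAddEquiv (α := VecAlg n R')).symm _ s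
  have hconjC : ∀ a b : Fin n, conj (η⁻¹ a b) = η a b := by
    intro a b
    rw [← hreal a b, Complex.conj_conj]
  have hdu : η⁻¹ * η = 1 := Matrix.nonsing_inv_mul η ((Matrix.isUnit_iff_isUnit_det η).mp hη)
  have hffL : ∀ i : Fin n, f (L i) = vg n R' i := by
    intro i
    rw [hLdef]
    rw [hfsum]
    calc (∑ a : Fin n, f (η⁻¹ a i • vg n R' a))
        = ∑ a : Fin n, conj (η⁻¹ a i) • L a := by
          refine Finset.sum_congr rfl fun a _ => ?_
          rw [hfsmul, hfgen]
      _ = ∑ a : Fin n, ∑ b : Fin n, (η a i * η⁻¹ b a) • vg n R' b := by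
          refine Finset.sum_congr rfl fun a _ => ?_
          rw [hconjC, hLdef]
          simp only [Finset.smul_sum, smul_smul]
      _ = ∑ b : Fin n, (∑ a : Fin n, η⁻¹ b a * η a i) • vg n R' b := by
          rw [Finset.sum_comm]
          refine Finset.sum_congr rfl fun b _ => ?_
          rw [Finset.sum_smul]
          refine Finset.sum_congr rfl fun a _ => ?_
          rw [mul_comm]
      _ = ∑ b : Fin n, ((η⁻¹ * η) b i) • vg n R' b := by
          refine Finset.sum_congr rfl fun b _ => ?_
          rw [Matrix.mul_apply]
      _ = vg n R' i := by
          rw [hdu]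
          simp [Matrix.one_apply]
  have hfinv : ∀ z : VecAlg n R', f (f z) = z := by
    intro z
    obtain ⟨x, rfl⟩ := RingQuot.mkAlgHom_surjective ℂ (VecRel n R') z
    induction x using FreeAlgebra.induction with
    | grade0 c =>
        rw [(RingQuot.mkAlgHom ℂ (VecRel n R')).commutes c, hfalg, hfalg, Complex.conj_conj]
    | grade1 i =>
        rw [show (RingQuot.mkAlgHom ℂ (VecRel n R')) (FreeAlgebra.ι ℂ i) = vg n R' i from rfl,
          hfgen, hffL]
    | mul a b ha hb =>
        rw [map_mul, hfmul, hfmul, ha, hb]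
    | add a b ha hb =>
        rw [map_add, hfadd, hfadd, ha, hb]
  refine ⟨f, ⟨⟨hfadd, hfsmul, hfmul, hfone, hfinv⟩, hfgen⟩, ?_⟩
  rintro g ⟨⟨gadd, gsmul, gmul, gone, -⟩, ggen⟩
  funext z
  obtain ⟨x, rfl⟩ := RingQuot.mkAlgHom_surjective ℂ (VecRel n R') z
  induction x using FreeAlgebra.induction with
  | grade0 c =>
      rw [(RingQuot.mkAlgHom ℂ (VecRel n R')).commutes c, Algebra.algebraMap_eq_smul_one,
        gsmul, gone, hfsmul, hfone]
  | grade1 i =>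
      rw [show (RingQuot.mkAlgHom ℂ (VecRel n R')) (FreeAlgebra.ι ℂ i) = vg n R' i from rfl,
        ggen, hfgen]
  | mul a b ha hb =>
      rw [map_mul, gmul, hfmul, ha, hb]
  | add a b ha hb =>
      rw [map_add, gadd, hfadd, ha, hb]
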